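/- Let n ≥ 0 and let act = [s_0, …, s_k] and act' = [s'_0, …, s'_{k'}] be two ordered partitions of the set {0, …, n} (i.e., lists of pairwise disjoint nonempty subsets whose union is {0, …, n}). For a process i, let view_i(act) = s_0 ∪ ⋯ ∪ s_j where j is the unique index with i ∈ s_j, and similarly for act'. If view_i(act) = view_i(act') for every i ∈ {0, …, n}, then act = act' (same length and equal corresponding concurrency classes). Consequently, the Kripke frame on ordered partitions with relations act ∼_i act' iff view_i(act) = view_i(act') is proper. -/

import Mathlib

/-- An ordered partition (block schedule of the one-round immediate snapshot
model) of `{0, …, n}` is a list of nonempty, pairwise disjoint subsets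
(concurrency classes) whose union is the whole set. -/
def IsOrderedPartition {n : ℕ} (l : List (Finset (Fin (n + 1)))) : Prop :=
  (∀ s ∈ l, s.Nonempty) ∧
  l.Pairwise Disjoint ∧
  l.foldr (· ∪ ·) ∅ = Finset.univ

/-- The view of process `i` in an ordered partition `[s_0, …, s_k]` is
`s_0 ∪ ⋯ ∪ s_j`, where `s_j` is the concurrency class containing `i`
(and `∅` if no class contains `i`). -/
def view {n : ℕ} (i : Fin (n + 1)) :
    List (Finset (Fin (n + 1))) → Finset (Fin (n + 1))
  | [] => ∅
  | s :: rest => if i ∈ s then s else s ∪ view i rest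

lemma view_subset_foldr {n : ℕ} (i : Fin (n + 1)) (l : List (Finset (Fin (n + 1)))) :
    view i l ⊆ l.foldr (· ∪ ·) ∅ := by
  induction l with
  | nil => simp [view]
  | cons s rest ih =>
    simp only [view, List.foldr]
    split
    · exact Finset.subset_union_left
    · exact Finset.union_subset_union (le_refl s) ih

lemma head_subset_view {n : ℕ} (i : Fin (n + 1)) (s : Finset (Fin (n + 1)))
    (l : List (Finset (Fin (n + 1)))) : s ⊆ view i (s :: l) := by
  simp only [view]; split
  · exact le_refl s
  · exact Finset.subset_union_left

lemma disjoint_foldr {n : ℕ} (s : Finset (Fin (n + 1))) (l : List (Finset (Fin (n + 1))))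
    (h : ∀ t ∈ l, Disjoint s t) : Disjoint s (l.foldr (· ∪ ·) ∅) := by
  induction l with
  | nil => simp
  | cons t rest ih =>
    simp only [List.foldr, Finset.disjoint_union_right]
    exact ⟨h t (by simp), ih fun u hu => h u (by simp [hu])⟩

lemma aux {n : ℕ} (act act' : List (Finset (Fin (n + 1))))
    (h1 : ∀ s ∈ act, s.Nonempty) (h1' : ∀ s ∈ act', s.Nonempty)
    (h2 : act.Pairwise Disjoint) (h2' : act'.Pairwise Disjoint)
    (hu : act.foldr (· ∪ ·) ∅ = act'.foldr (· ∪ ·) ∅)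
    (hview : ∀ i ∈ act.foldr (· ∪ ·) ∅, view i act = view i act') :
    act = act' := by
  induction act generalizing act' with
  | nil =>
    cases act' with
    | nil => rfl
    | cons s' rest' =>
      exfalso
      obtain ⟨j, hj⟩ := h1' s' (by simp)
      have : j ∈ (List.foldr (· ∪ ·) ∅ (s' :: rest')) :=
        Finset.mem_of_subset Finset.subset_union_left hj
      rw [← hu] at this
      simp at this
  | cons s rest ih =>
    cases act' with
    | nil =>
      exfalso
      obtain ⟨j, hj⟩ := h1 s (by simp)
      have : j ∈ (List.foldr (· ∪ ·) ∅ (s :: rest)) :=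
        Finset.mem_of_subset Finset.subset_union_left hj
      rw [hu] at this
      simp at this
    | cons s' rest' =>
      -- first show s = s'
      have hss' : s = s' := by
        apply Finset.Subset.antisymm
        · obtain ⟨j, hj⟩ := h1' s' (by simp)
          have hjmem : j ∈ List.foldr (· ∪ ·) ∅ (s :: rest) := by
            rw [hu]; exact Finset.mem_of_subset Finset.subset_union_left hj
          have hv := hview j hjmem
          have : view j (s' :: rest') = s' := by simp [view, hj]
          rw [this] at hv
          calc s ⊆ view j (s :: rest) := head_subset_view j s rest
            _ = s' := hv
        · obtain ⟨j, hj⟩ := h1 s (by simp)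
          have hjmem : j ∈ List.foldr (· ∪ ·) ∅ (s :: rest) :=
            Finset.mem_of_subset Finset.subset_union_left hj
          have hv := hview j hjmem
          have : view j (s :: rest) = s := by simp [view, hj]
          rw [this] at hv
          calc s' ⊆ view j (s' :: rest') := head_subset_view j s' rest'
            _ = s := hv.symm
      subst hss'
      have hds : Disjoint s (rest.foldr (· ∪ ·) ∅) :=
        disjoint_foldr s rest (List.pairwise_cons.mp h2).1
      have hds' : Disjoint s (rest'.foldr (· ∪ ·) ∅) :=
        disjoint_foldr s rest' (List.pairwise_cons.mp h2').1
      have hfold : rest.foldr (· ∪ ·) ∅ = rest'.foldr (· ∪ ·) ∅ := by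
        have h := hu
        simp only [List.foldr] at h
        have h3 := congrArg (· \ s) h
        rwa [Finset.union_sdiff_cancel_left hds, Finset.union_sdiff_cancel_left hds'] at h3
      have hrest : rest = rest' := by
        apply ih rest' (fun t ht => h1 t (List.mem_cons_of_mem _ ht))
          (fun t ht => h1' t (List.mem_cons_of_mem _ ht))
          (List.pairwise_cons.mp h2).2 (List.pairwise_cons.mp h2').2 hfold
        intro i hi
        have hins : i ∉ s := fun hs => (hds.forall_ne_finset hs hi) rfl
        have hv := hview i (by
          simp only [List.foldr, Finset.mem_union]; right; exact hi)
        simp only [view, if_neg hins] at hv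
        have h1s : view i rest = (s ∪ view i rest) \ s := by
          rw [Finset.union_sdiff_cancel_left]
          exact hds.mono_right (view_subset_foldr i rest)
        have h2s : view i rest' = (s ∪ view i rest') \ s := by
          rw [Finset.union_sdiff_cancel_left]
          exact hds'.mono_right (view_subset_foldr i rest')
        rw [h1s, h2s, hv]
      rw [hrest]

/-- If two ordered partitions of `{0, …, n}` give every process the same
view, then they are equal. Consequently, the Kripke frame on ordered
partitions with `act ∼_i act'` iff `view_i(act) = view_i(act')` is proper. -/
theorem ordered_partition_eq_of_views_eq
    {n : ℕ} (act act' : List (Finset (Fin (n + 1))))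
    (hact : IsOrderedPartition act) (hact' : IsOrderedPartition act')
    (hview : ∀ i : Fin (n + 1), view i act = view i act') :
    act = act' := by
  exact aux act act' hact.1 hact'.1 hact.2.1 hact'.2.1
    (hact.2.2.trans hact'.2.2.symm) (fun i _ => hview i)
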